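/- For every real number q and every integer k ≥ 1, the (k+1)×(k+1) determinant det((q^{i·j})_{i,j=0}^{k}) equals (∏_{l=1}^{k} q^{l(l-1)/2}) · (∏_{j=1}^{k} (q^{j} − 1)^{k+1−j}). -/

import Mathlib

open Finset

private lemma Ioc_succ_insert {i k : ℕ} (h : i ≤ k) :
    Finset.Ioc i (k + 1) = insert (k + 1) (Finset.Ioc i k) := by
  ext x
  simp only [mem_Ioc, mem_insert]
  omega

private lemma aux1 (q : ℝ) (k : ℕ) :
    ∏ i ∈ range (k + 1), (q ^ (k + 1) - q ^ i) =
      q ^ ((k + 1) * k / 2) * ∏ d ∈ Icc 1 (k + 1), (q ^ d - 1) := by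
  have h1 : ∀ i ∈ range (k + 1), q ^ (k + 1) - q ^ i
      = q ^ i * (q ^ (k + 1 - i) - 1) := by
    intro i hi
    rw [mem_range] at hi
    rw [mul_sub, mul_one, ← pow_add]
    congr 2
    omega
  rw [prod_congr rfl h1, prod_mul_distrib, prod_pow_eq_pow_sum]
  congr 1
  · rw [Finset.sum_range_id]
    norm_num
  · have h2 : ∏ i ∈ range (k + 1), (q ^ (k + 1 - i) - 1)
        = ∏ i ∈ range (k + 1), (q ^ (i + 1) - 1) := by
      rw [← Finset.prod_range_reflect (fun j => q ^ (j + 1) - 1) (k + 1)]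
      refine prod_congr rfl fun i hi => ?_
      rw [mem_range] at hi
      congr 2
      omega
    rw [h2, ← Finset.Ico_add_one_right_eq_Icc, Finset.prod_Ico_eq_prod_range]
    refine prod_congr (by congr 1) fun i _ => by rw [add_comm]

private lemma auxP (q : ℝ) : ∀ k : ℕ,
    ∏ i ∈ range (k + 1), ∏ j ∈ Ioc i k, (q ^ j - q ^ i) =
      (∏ l ∈ Finset.Icc 1 k, q ^ (l * (l - 1) / 2)) *
        ∏ j ∈ Finset.Icc 1 k, (q ^ j - 1) ^ (k + 1 - j) := by
  intro k
  induction k with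
  | zero => simp
  | succ k ih =>
    rw [prod_range_succ]
    have he : Finset.Ioc (k + 1) (k + 1) = ∅ := by simp
    rw [he, prod_empty, mul_one]
    have hsplit : ∀ i ∈ range (k + 1),
        ∏ j ∈ Ioc i (k + 1), (q ^ j - q ^ i)
          = (q ^ (k + 1) - q ^ i) * ∏ j ∈ Ioc i k, (q ^ j - q ^ i) := by
      intro i hi
      rw [mem_range] at hi
      rw [Ioc_succ_insert (by omega), prod_insert (by simp)]
    rw [prod_congr rfl hsplit, prod_mul_distrib, aux1, ih]
    have hIcc : Icc 1 (k + 1) = insert (k + 1) (Icc 1 k) := by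
      ext x; simp only [mem_Icc, mem_insert]; omega
    rw [hIcc, prod_insert (by simp), prod_insert (by simp), prod_insert (by simp)]
    have hpow : ∀ j ∈ Icc 1 k, (q ^ j - 1) ^ (k + 1 + 1 - j)
        = (q ^ j - 1) ^ (k + 1 - j) * (q ^ j - 1) := by
      intro j hj
      rw [mem_Icc] at hj
      rw [← pow_succ]
      congr 1
      omega
    rw [prod_congr rfl hpow, prod_mul_distrib]
    have : (k + 1) * (k + 1 - 1) / 2 = (k + 1) * k / 2 := by norm_num
    rw [this]
    have h11 : k + 1 + 1 - (k + 1) = 1 := by omega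
    rw [h11, pow_one]
    ring

theorem det_pow_mul (q : ℝ) (k : ℕ) (hk : 1 ≤ k) :
    Matrix.det (Matrix.of fun i j : Fin (k + 1) => q ^ (i.val * j.val)) =
      (∏ l ∈ Finset.Icc 1 k, q ^ (l * (l - 1) / 2)) *
        ∏ j ∈ Finset.Icc 1 k, (q ^ j - 1) ^ (k + 1 - j) := by
  have hm : (Matrix.of fun i j : Fin (k + 1) => q ^ (i.val * j.val))
      = Matrix.vandermonde (fun i : Fin (k + 1) => q ^ (i : ℕ)) := by
    ext i j
    simp [Matrix.vandermonde, ← pow_mul]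
  rw [hm, Matrix.det_vandermonde, ← auxP q k]
  rw [← Fin.prod_univ_eq_prod_range
    (fun i => ∏ j ∈ Ioc i k, (q ^ j - q ^ i)) (k + 1)]
  refine Finset.prod_congr rfl fun i _ => ?_
  have hmap : (Finset.Ioi i).map Fin.valEmbedding = Finset.Ioc (i : ℕ) k := by
    rw [Fin.map_valEmbedding_Ioi]
    ext x; simp only [mem_Ioo, mem_Ioc]; omega
  rw [← hmap, Finset.prod_map]
  rfl
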